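/- Faà di Bruno-type formula with a multiplicative factor: let F(x) = Σ_{n≥0} f_n x^n/n!, G(x) = Σ_{n≥1} g_n x^n/n! (with zero constant term), and H(x) = Σ_{n≥1} h_n x^n/n! be formal power series. Then the n-th coefficient (times n!) of (H'(x))^r · F(G(x)) equals Σ_{k=0}^{n} f_k B^{(r)}_{n+r, k+r}(g_j ; h_j); that is, (H')^r · (F ∘ G) = Σ_{n≥0} (Σ_{k=0}^n f_k B^{(r)}_{n+r,k+r}(g;h)) x^n/n!. -/

import Mathlib

open Finset

/-- The partial `r`-Bell polynomial `B^{(r)}_{n+r,k+r}(a;b)`, defined by the explicit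
formula `(n!/k!) * Σ_{n_1+...+n_{k+r}=n-k} Π_{i=1}^{r} b_{n_i+1}/n_i! *
Π_{i=r+1}^{r+k} a_{n_i+1}/(n_i+1)!`, the sum over `(k+r)`-tuples of naturals. -/
noncomputable def rBell {A : Type*} [CommRing A] [Algebra ℚ A]
    (r k n : ℕ) (a b : ℕ → A) : A :=
  ((n.factorial : ℚ) / (k.factorial : ℚ)) •
    ∑ f ∈ Finset.Nat.antidiagonalTuple (k + r) (n - k),
      ∏ i : Fin (k + r),
        if (i : ℕ) < r then (((f i).factorial : ℚ))⁻¹ • b (f i + 1)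
        else ((((f i) + 1).factorial : ℚ))⁻¹ • a (f i + 1)

/-- coefficient of a finite product over `Fin m`, indexed by `antidiagonalTuple`. -/
lemma coeff_prod_fin {A : Type*} [CommSemiring A] (m n : ℕ) (P : Fin m → PowerSeries A) :
    PowerSeries.coeff n (∏ i, P i) =
      ∑ t ∈ Finset.Nat.antidiagonalTuple m n, ∏ i, PowerSeries.coeff (t i) (P i) := by
  rw [PowerSeries.coeff_prod]
  refine Finset.sum_nbij' (fun f => ⇑f) (fun t => Finsupp.equivFunOnFinite.symm t)
    ?_ ?_ ?_ ?_ ?_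
  · intro a ha
    rw [Finset.mem_finsuppAntidiag] at ha
    rw [Finset.Nat.mem_antidiagonalTuple]
    exact ha.1
  · intro a ha
    rw [Finset.Nat.mem_antidiagonalTuple] at ha
    rw [Finset.mem_finsuppAntidiag]
    exact ⟨ha, Finset.subset_univ _⟩
  · intro a _; exact Finsupp.equivFunOnFinite.symm_apply_apply a
  · intro a _; rfl
  · intro a _; rfl

lemma card_filter_lt (r k : ℕ) :
    (Finset.univ.filter fun i : Fin (k + r) => (i : ℕ) < r).card = r := by
  have : (Finset.univ.filter fun i : Fin (k + r) => (i : ℕ) < r)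
      = (Finset.range r).attachFin
        (fun m hm => lt_of_lt_of_le (Finset.mem_range.mp hm) (Nat.le_add_left r k)) := by
    ext i
    simp [Finset.mem_attachFin]
  rw [this, Finset.card_attachFin, Finset.card_range]

lemma card_filter_not_lt (r k : ℕ) :
    (Finset.univ.filter fun i : Fin (k + r) => ¬ (i : ℕ) < r).card = k := by
  have h := Finset.card_filter_add_card_filter_not
    (s := (Finset.univ : Finset (Fin (k + r)))) (p := fun i : Fin (k + r) => (i : ℕ) < r)
  rw [card_filter_lt, Finset.card_univ, Fintype.card_fin] at h
  omega

/-- The core identity: `coeff n (H'^r * G^k)` as a sum over `antidiagonalTuple`. -/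
lemma core_coeff {A : Type*} [CommRing A] [Algebra ℚ A] (r k n : ℕ) (g h : ℕ → A)
    (hkn : k ≤ n) :
    PowerSeries.coeff n
        ((PowerSeries.mk fun j => ((j.factorial : ℚ))⁻¹ • h (j + 1)) ^ r *
          (PowerSeries.mk fun j =>
            if j = 0 then 0 else ((j.factorial : ℚ))⁻¹ • g j) ^ k) =
      ∑ u ∈ Finset.Nat.antidiagonalTuple (k + r) (n - k),
        ∏ i : Fin (k + r),
          if (i : ℕ) < r then (((u i).factorial : ℚ))⁻¹ • h (u i + 1)
          else ((((u i) + 1).factorial : ℚ))⁻¹ • g (u i + 1) := by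
  classical
  set H' : PowerSeries A := PowerSeries.mk fun j => ((j.factorial : ℚ))⁻¹ • h (j + 1) with hH
  set G : PowerSeries A := PowerSeries.mk fun j =>
    if j = 0 then 0 else ((j.factorial : ℚ))⁻¹ • g j with hG
  have hprod : H' ^ r * G ^ k = ∏ i : Fin (k + r), (if (i : ℕ) < r then H' else G) := by
    rw [Finset.prod_ite, Finset.prod_const, Finset.prod_const, card_filter_lt,
      card_filter_not_lt]
  rw [hprod, coeff_prod_fin]
  -- restrict to "good" tuples (positive in the `G` slots)
  have hzero : ∀ t ∈ Finset.Nat.antidiagonalTuple (k + r) n,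
      (∏ i : Fin (k + r), PowerSeries.coeff (t i) (if (i : ℕ) < r then H' else G)) ≠ 0 →
      (∀ i : Fin (k + r), ¬ (i : ℕ) < r → t i ≠ 0) := by
    intro t _ hne
    by_contra hcon
    push_neg at hcon
    obtain ⟨i, hir, hti⟩ := hcon
    apply hne
    apply Finset.prod_eq_zero (Finset.mem_univ i)
    rw [if_neg (Nat.not_lt.mpr hir), hti, hG]
    simp
  rw [← Finset.sum_filter_of_ne hzero]
  refine Finset.sum_nbij' (fun t => fun i => if (i : ℕ) < r then t i else t i - 1)
    (fun u => fun i => if (i : ℕ) < r then u i else u i + 1) ?_ ?_ ?_ ?_ ?_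
  · intro t ht
    rw [Finset.mem_filter, Finset.Nat.mem_antidiagonalTuple] at ht
    obtain ⟨hsum, hpos⟩ := ht
    rw [Finset.Nat.mem_antidiagonalTuple]
    beta_reduce
    have key : (∑ i : Fin (k + r), (if (i : ℕ) < r then t i else t i - 1)) + k = n := by
      have hk : (∑ i : Fin (k + r), (if (i : ℕ) < r then 0 else 1)) = k := by
        rw [Finset.sum_ite, Finset.sum_const, Finset.sum_const, card_filter_not_lt]
        simp
      calc (∑ i : Fin (k + r), (if (i : ℕ) < r then t i else t i - 1)) + k
          = (∑ i : Fin (k + r), (if (i : ℕ) < r then t i else t i - 1))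
            + ∑ i : Fin (k + r), (if (i : ℕ) < r then 0 else 1) := by rw [hk]
        _ = ∑ i : Fin (k + r),
              ((if (i : ℕ) < r then t i else t i - 1) + (if (i : ℕ) < r then 0 else 1)) := by
            rw [Finset.sum_add_distrib]
        _ = ∑ i : Fin (k + r), t i := by
            apply Finset.sum_congr rfl
            intro i _
            by_cases hir : (i : ℕ) < r
            · simp [hir]
            · have := hpos i hir
              simp only [if_neg hir]
              omega
        _ = n := hsum
    omega
  · intro u hu
    rw [Finset.Nat.mem_antidiagonalTuple] at hu
    rw [Finset.mem_filter, Finset.Nat.mem_antidiagonalTuple]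
    beta_reduce
    constructor
    · have hk : (∑ i : Fin (k + r), (if (i : ℕ) < r then 0 else 1)) = k := by
        rw [Finset.sum_ite, Finset.sum_const, Finset.sum_const, card_filter_not_lt]
        simp
      have : (∑ i : Fin (k + r), (if (i : ℕ) < r then u i else u i + 1))
          = (∑ i : Fin (k + r), u i) + ∑ i : Fin (k + r), (if (i : ℕ) < r then 0 else 1) := by
        rw [← Finset.sum_add_distrib]
        apply Finset.sum_congr rfl
        intro i _
        by_cases hir : (i : ℕ) < r <;> simp [hir]
      rw [this, hk, hu]
      omega
    · intro i hir
      simp [if_neg hir]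
  · intro t ht
    rw [Finset.mem_filter] at ht
    funext i
    by_cases hir : (i : ℕ) < r
    · simp [hir]
    · have := ht.2 i hir
      simp only [if_neg hir]
      omega
  · intro u _
    funext i
    by_cases hir : (i : ℕ) < r <;> simp [hir]
  · intro t ht
    rw [Finset.mem_filter] at ht
    apply Finset.prod_congr rfl
    intro i _
    beta_reduce
    by_cases hir : (i : ℕ) < r
    · rw [if_pos hir, if_pos hir, if_pos hir, hH]
      simp
    · have hpos := ht.2 i hir
      rw [if_neg hir, if_neg hir, if_neg hir, hG]
      simp only [PowerSeries.coeff_mk, if_neg hpos]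
      have htt : t i - 1 + 1 = t i := Nat.succ_pred_eq_of_ne_zero hpos
      rw [htt]

/-- Faà di Bruno-type formula: the `n`-th coefficient of `(H')^r ⋅ F(G(x))` equals
`(1/n!) Σ_{k=0}^{n} f_k B^{(r)}_{n+r,k+r}(g;h)`, where `F = Σ f_n x^n/n!`,
`G = Σ_{n≥1} g_n x^n/n!` and `H = Σ_{n≥1} h_n x^n/n!`. Since `G` has zero constant
term, the composition `F ∘ G` agrees in degree `n` with `Σ_{k=0}^{n} (f_k/k!) G^k`. -/
theorem faaDiBruno_rBell {A : Type*} [CommRing A] [Algebra ℚ A]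
    (r : ℕ) (f g h : ℕ → A) (n : ℕ) :
    PowerSeries.coeff n
        ((PowerSeries.mk fun j => ((j.factorial : ℚ))⁻¹ • h (j + 1)) ^ r *
          ∑ k ∈ Finset.range (n + 1),
            ((k.factorial : ℚ))⁻¹ •
              (PowerSeries.C (f k) *
                (PowerSeries.mk fun j =>
                  if j = 0 then 0 else ((j.factorial : ℚ))⁻¹ • g j) ^ k)) =
      ((n.factorial : ℚ))⁻¹ • ∑ k ∈ Finset.range (n + 1), f k * rBell r k n g h := by
  rw [Finset.mul_sum, map_sum, Finset.smul_sum]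
  apply Finset.sum_congr rfl
  intro k hk
  have hkn : k ≤ n := Nat.lt_succ_iff.mp (Finset.mem_range.mp hk)
  rw [mul_smul_comm, PowerSeries.coeff_smul, ← mul_assoc,
    mul_comm ((PowerSeries.mk fun j => ((j.factorial : ℚ))⁻¹ • h (j + 1)) ^ r),
    mul_assoc, PowerSeries.coeff_C_mul, core_coeff r k n g h hkn, rBell]
  rw [mul_smul_comm, smul_smul]
  congr 1
  have h1 : (n.factorial : ℚ) ≠ 0 := Nat.cast_ne_zero.mpr n.factorial_ne_zero
  have h2 : (k.factorial : ℚ) ≠ 0 := Nat.cast_ne_zero.mpr k.factorial_ne_zero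
  field_simp
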